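/- Let B ∈ ℂ^{n×k} have rank k with unique orthonormal polar factor P_*. For any P ∈ ℂ^{n×k} with orthonormal columns, ‖B − P(Pᴴ B)‖_F ≤ ‖B‖_2 · ‖sin Θ(R(P), R(P_*))‖_F, where ‖B‖_2 is the largest singular value of B. -/

import Mathlib

open scoped ComplexOrder
open Matrix

/-- The tuple `f` rearranged into decreasing order; `sortedDesc f 0` is the largest entry. -/
noncomputable def sortedDesc {m : ℕ} (f : Fin m → ℝ) : Fin m → ℝ :=
  fun i => (f ∘ Tuple.sort f) i.rev

/-- The singular values of a complex matrix, in decreasing order. -/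
noncomputable def sv {n k : ℕ} (B : Matrix (Fin n) (Fin k) ℂ) : Fin k → ℝ :=
  sortedDesc fun i =>
    Real.sqrt ((Matrix.posSemidef_conjTranspose_mul_self B).isHermitian.eigenvalues i)

/-- The trace (nuclear) norm: the sum of the singular values. -/
noncomputable def trNorm {n k : ℕ} (B : Matrix (Fin n) (Fin k) ℂ) : ℝ := ∑ i, sv B i

/-- The Frobenius norm. -/
noncomputable def frobNorm {n k : ℕ} (A : Matrix (Fin n) (Fin k) ℂ) : ℝ :=
  Real.sqrt (∑ i, ∑ j, ‖A i j‖ ^ 2)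

/-- `‖sin Θ(R(X), R(Y))‖_F` where `Θ` is the diagonal matrix of canonical angles
`θ_i = arccos σ_i(Xᴴ Y)` between the column spaces of `X` and `Y`. -/
noncomputable def sinThetaF {n k : ℕ} (X Y : Matrix (Fin n) (Fin k) ℂ) : ℝ :=
  Real.sqrt (∑ i, Real.sin (Real.arccos (sv (Xᴴ * Y) i)) ^ 2)

/-- The smallest singular value. -/
noncomputable def smin {n k : ℕ} (B : Matrix (Fin n) (Fin k) ℂ) : ℝ := ⨅ i, sv B i

/-- The spectral norm (largest singular value). -/
noncomputable def s2norm {n k : ℕ} (B : Matrix (Fin n) (Fin k) ℂ) : ℝ := ⨆ i, sv B i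

/-- The orthonormal polar factor `B (Bᴴ B)^{-1/2}` (for `B` of full column rank). -/
noncomputable def polarFactor {n k : ℕ} (B : Matrix (Fin n) (Fin k) ℂ) :
    Matrix (Fin n) (Fin k) ℂ :=
  B * ((Matrix.posSemidef_conjTranspose_mul_self B).1.eigenvectorUnitary.1 *
      Matrix.diagonal ((↑) ∘ Real.sqrt ∘ (Matrix.posSemidef_conjTranspose_mul_self B).1.eigenvalues) *
      (star (Matrix.posSemidef_conjTranspose_mul_self B).1.eigenvectorUnitary :
        Matrix (Fin k) (Fin k) ℂ) : Matrix (Fin k) (Fin k) ℂ)⁻¹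

/-- Eigenvalues of a Hermitian matrix, in decreasing order. -/
noncomputable def eigsDesc {n : ℕ} {H : Matrix (Fin n) (Fin n) ℂ} (hH : H.IsHermitian) :
    Fin n → ℝ :=
  sortedDesc hH.eigenvalues

/-! ### Auxiliary lemmas -/

/-- Squared Frobenius norm. -/
noncomputable def fsq {n k : ℕ} (X : Matrix (Fin n) (Fin k) ℂ) : ℝ :=
  ∑ i, ∑ j, ‖X i j‖ ^ 2

lemma fsq_nonneg {n k : ℕ} (X : Matrix (Fin n) (Fin k) ℂ) : 0 ≤ fsq X :=
  Finset.sum_nonneg fun _ _ => Finset.sum_nonneg fun _ _ => sq_nonneg _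

lemma frobNorm_eq_sqrt_fsq {n k : ℕ} (X : Matrix (Fin n) (Fin k) ℂ) :
    frobNorm X = Real.sqrt (fsq X) := rfl

lemma star_mul_self_complex (z : ℂ) : star z * z = ((‖z‖ ^ 2 : ℝ) : ℂ) := by
  rw [show (star z) = (starRingEnd ℂ) z from rfl, mul_comm, Complex.mul_conj,
    Complex.normSq_eq_norm_sq]

lemma trace_cts {n k : ℕ} (X : Matrix (Fin n) (Fin k) ℂ) :
    trace (Xᴴ * X) = ((fsq X : ℝ) : ℂ) := by
  simp only [trace, diag, mul_apply, conjTranspose_apply, fsq]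
  simp_rw [star_mul_self_complex]
  push_cast
  rw [Finset.sum_comm]

lemma trace_stc {n k : ℕ} (X : Matrix (Fin n) (Fin k) ℂ) :
    trace (X * Xᴴ) = ((fsq X : ℝ) : ℂ) := by
  rw [Matrix.trace_mul_comm, trace_cts]

lemma fsq_mul_right {n k : ℕ} (X : Matrix (Fin n) (Fin k) ℂ)
    (V : Matrix (Fin k) (Fin k) ℂ) (hV : V * Vᴴ = 1) : fsq (X * V) = fsq X := by
  have h : ((fsq (X * V) : ℝ) : ℂ) = ((fsq X : ℝ) : ℂ) := by
    rw [← trace_stc, ← trace_stc, Matrix.conjTranspose_mul,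
      show X * V * (Vᴴ * Xᴴ) = X * Xᴴ by
        rw [Matrix.mul_assoc, ← Matrix.mul_assoc V Vᴴ Xᴴ, hV, Matrix.one_mul]]
  exact_mod_cast h

lemma sortedDesc_apply {m : ℕ} (f : Fin m → ℝ) (i : Fin m) :
    sortedDesc f i = f (Tuple.sort f i.rev) := rfl

lemma exists_sortedDesc_eq {m : ℕ} (f : Fin m → ℝ) (j : Fin m) :
    ∃ i, sortedDesc f i = f j :=
  ⟨((Tuple.sort f)⁻¹ j).rev, by
    rw [sortedDesc_apply, Fin.rev_rev, Equiv.Perm.inv_def, Equiv.apply_symm_apply]⟩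

lemma sum_comp_sortedDesc {m : ℕ} (f : Fin m → ℝ) (g : ℝ → ℝ) :
    ∑ i, g (sortedDesc f i) = ∑ i, g (f i) := by
  have := Equiv.sum_comp (Fin.revPerm.trans (Tuple.sort f)) (fun j => g (f j))
  simpa [sortedDesc] using this

theorem residual_le_norm2_mul_sinTheta {n k : ℕ} (hkn : k ≤ n)
    (B P : Matrix (Fin n) (Fin k) ℂ) (hrank : B.rank = k) (hP : Pᴴ * P = 1) :
    frobNorm (B - P * (Pᴴ * B)) ≤ s2norm B * sinThetaF P (polarFactor B) := by
  classical
  set hA := Matrix.posSemidef_conjTranspose_mul_self B with hA_def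
  set S : Matrix (Fin k) (Fin k) ℂ := hA.1.eigenvectorUnitary.1 *
      Matrix.diagonal ((↑) ∘ Real.sqrt ∘ hA.1.eigenvalues) *
      (star hA.1.eigenvectorUnitary : Matrix (Fin k) (Fin k) ℂ) with hS_def
  have hSS2 : S * S = Bᴴ * B := by
    have hU := Unitary.coe_star_mul_self hA.1.eigenvectorUnitary
    conv_rhs => rw [hA.1.spectral_theorem, Unitary.conjStarAlgAut_apply]
    rw [hS_def, show ∀ X Y Z W : Matrix (Fin k) (Fin k) ℂ, X * Y * Z * (X * W * Z)
        = X * (Y * (Z * X) * W) * Z from fun X Y Z W => by simp only [Matrix.mul_assoc],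
      hU, Matrix.mul_one, Matrix.diagonal_mul_diagonal]
    congr 3
    funext i
    simp [← Complex.ofReal_mul, Real.mul_self_sqrt (hA.eigenvalues_nonneg i)]
  -- `Bᴴ * B` is invertible
  have hrankA : (Bᴴ * B).rank = k := by rw [Matrix.rank_conjTranspose_mul_self, hrank]
  have htop : LinearMap.range (Bᴴ * B).mulVecLin = ⊤ := by
    apply Submodule.eq_top_of_finrank_eq
    rw [show Module.finrank ℂ (LinearMap.range (Bᴴ * B).mulVecLin) = (Bᴴ * B).rank from rfl,
      hrankA, Module.finrank_fintype_fun_eq_card, Fintype.card_fin]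
  have hAunit : IsUnit (Bᴴ * B) := by
    rw [← Matrix.mulVec_surjective_iff_isUnit]
    have hs := LinearMap.range_eq_top.mp htop
    intro y
    obtain ⟨x, hx⟩ := hs y
    exact ⟨x, by simpa [Matrix.mulVecLin_apply] using hx⟩
  -- `S` is invertible
  have hdetS : IsUnit S.det := by
    have hd : IsUnit ((Bᴴ * B).det) := (Matrix.isUnit_iff_isUnit_det _).mp hAunit
    rw [← hSS2, Matrix.det_mul] at hd
    exact isUnit_of_mul_isUnit_left hd
  have hSS : S * S⁻¹ = 1 := Matrix.mul_nonsing_inv _ hdetS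
  have hS'S : S⁻¹ * S = 1 := Matrix.nonsing_inv_mul _ hdetS
  have hSH : Sᴴ = S := by
    simp only [hS_def, Matrix.conjTranspose_mul, Matrix.diagonal_conjTranspose,
      Matrix.star_eq_conjTranspose, Matrix.conjTranspose_conjTranspose, Matrix.mul_assoc]
    congr 3
    funext i
    simp
  have hSinvH : (S⁻¹)ᴴ = S⁻¹ := by rw [Matrix.conjTranspose_nonsing_inv, hSH]
  set Q := polarFactor B with hQdef
  have hQS : Q * S = B := by
    rw [hQdef, polarFactor, Matrix.mul_assoc, hS'S, Matrix.mul_one]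
  have hQHQ : Qᴴ * Q = 1 := by
    have h1 : Qᴴ * Q = S⁻¹ * ((Bᴴ * B) * S⁻¹) := by
      rw [hQdef, show polarFactor B = B * S⁻¹ from rfl, Matrix.conjTranspose_mul, hSinvH, Matrix.mul_assoc,
        Matrix.mul_assoc]
    rw [h1, ← hSS2, Matrix.mul_assoc S S S⁻¹, hSS, Matrix.mul_one, hS'S]
  -- residual factorization
  set M := Q - P * (Pᴴ * Q) with hMdef
  have hres : B - P * (Pᴴ * B) = M * S := by
    rw [hMdef, Matrix.sub_mul, ← hQS, Matrix.mul_assoc, Matrix.mul_assoc]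
  set Pi := P * Pᴴ with hPidef
  have hPi2 : Pi * Pi = Pi := by
    rw [hPidef, Matrix.mul_assoc, ← Matrix.mul_assoc Pᴴ P Pᴴ, hP, Matrix.one_mul]
  have hPiH : Piᴴ = Pi := by
    rw [hPidef, Matrix.conjTranspose_mul, Matrix.conjTranspose_conjTranspose]
  have hM : M = (1 - Pi) * Q := by
    rw [hMdef, Matrix.sub_mul, Matrix.one_mul, hPidef, Matrix.mul_assoc]
  have hI : (1 - Pi) * (1 - Pi) = 1 - Pi := by
    rw [Matrix.mul_sub, Matrix.sub_mul, Matrix.sub_mul, Matrix.one_mul, Matrix.mul_one, hPi2]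
    abel_nf
    simp
  have hMM : Mᴴ * M = 1 - (Pᴴ * Q)ᴴ * (Pᴴ * Q) := by
    rw [hM, Matrix.conjTranspose_mul, Matrix.conjTranspose_sub, Matrix.conjTranspose_one, hPiH,
      Matrix.mul_assoc, ← Matrix.mul_assoc (1 - Pi) (1 - Pi) Q, hI,
      Matrix.sub_mul, Matrix.one_mul, Matrix.mul_sub, hQHQ, Matrix.conjTranspose_mul,
      Matrix.conjTranspose_conjTranspose, hPidef, Matrix.mul_assoc P Pᴴ Q,
      ← Matrix.mul_assoc Qᴴ P (Pᴴ * Q)]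
  -- spectral facts about `B`
  set g : Fin k → ℝ := fun i => Real.sqrt (hA.isHermitian.eigenvalues i) with hgdef
  have hsv : sv B = sortedDesc g := rfl
  have hs2nn : 0 ≤ s2norm B :=
    Real.iSup_nonneg fun i => Real.sqrt_nonneg _
  have heig : ∀ j, hA.isHermitian.eigenvalues j ≤ (s2norm B) ^ 2 := by
    intro j
    have h1 : Real.sqrt (hA.isHermitian.eigenvalues j) ≤ s2norm B := by
      obtain ⟨i, hi⟩ := exists_sortedDesc_eq g j
      have h2 : sortedDesc g i ≤ s2norm B :=
        le_ciSup (Set.Finite.bddAbove (Set.finite_range (sv B))) i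
      rw [hi] at h2
      exact h2
    calc hA.isHermitian.eigenvalues j
        = Real.sqrt (hA.isHermitian.eigenvalues j) ^ 2 :=
          (Real.sq_sqrt (hA.eigenvalues_nonneg j)).symm
      _ ≤ (s2norm B) ^ 2 := pow_le_pow_left₀ (Real.sqrt_nonneg _) h1 2
  set U : Matrix (Fin k) (Fin k) ℂ := (hA.isHermitian.eigenvectorUnitary : Matrix (Fin k) (Fin k) ℂ) with hUdef
  set D : Matrix (Fin k) (Fin k) ℂ :=
    Matrix.diagonal (Complex.ofReal ∘ Real.sqrt ∘ hA.isHermitian.eigenvalues) with hDdef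
  have hSdec : S = U * D * Uᴴ := rfl
  have hU1 : U * Uᴴ = 1 := by
    have := Unitary.coe_mul_star_self hA.isHermitian.eigenvectorUnitary
    exact this
  have hU2 : Uᴴ * U = 1 := by
    have := Unitary.coe_star_mul_self hA.isHermitian.eigenvectorUnitary
    exact this
  -- key bound: fsq (M * S) ≤ (s2norm B)^2 * fsq M
  have hkey : fsq (M * S) ≤ (s2norm B) ^ 2 * fsq M := by
    have h1 : M * S = (M * U * D) * Uᴴ := by
      rw [hSdec, ← Matrix.mul_assoc, ← Matrix.mul_assoc]
    have hUH : Uᴴ * (Uᴴ)ᴴ = 1 := by rw [Matrix.conjTranspose_conjTranspose, hU2]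
    rw [h1, fsq_mul_right _ _ hUH]
    have h2 : fsq (M * U * D) ≤ (s2norm B) ^ 2 * fsq (M * U) := by
      rw [fsq, fsq, Finset.mul_sum]
      refine Finset.sum_le_sum fun i _ => ?_
      rw [Finset.mul_sum]
      refine Finset.sum_le_sum fun j _ => ?_
      rw [hDdef, Matrix.mul_diagonal, norm_mul, mul_pow]
      have habs : ‖(Complex.ofReal ∘ Real.sqrt ∘ hA.isHermitian.eigenvalues) j‖
          = Real.sqrt (hA.isHermitian.eigenvalues j) := by
        simp only [Function.comp_apply, Complex.norm_real, Real.norm_eq_abs,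
          abs_of_nonneg (Real.sqrt_nonneg _)]
      rw [habs, Real.sq_sqrt (hA.eigenvalues_nonneg j), mul_comm ((s2norm B) ^ 2) _]
      exact mul_le_mul_of_nonneg_left (heig j) (sq_nonneg _)
    calc fsq (M * U * D) ≤ (s2norm B) ^ 2 * fsq (M * U) := h2
      _ = (s2norm B) ^ 2 * fsq M := by rw [fsq_mul_right _ _ hU1]
  -- facts about C = Pᴴ * Q
  set C := Pᴴ * Q with hCdef
  have hCC := Matrix.posSemidef_conjTranspose_mul_self C
  have hPSD : (1 - Cᴴ * C).PosSemidef := by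
    rw [← hMM]; exact Matrix.posSemidef_conjTranspose_mul_self M
  have heigC : ∀ j, hCC.isHermitian.eigenvalues j ≤ 1 := by
    intro j
    have hv := hCC.isHermitian.eigenvalues_eq j
    set v : EuclideanSpace ℂ (Fin k) := hCC.isHermitian.eigenvectorBasis j with hvdef
    have h0 := hPSD.re_dotProduct_nonneg ⇑v
    have hone : RCLike.re (dotProduct (star (⇑v)) (⇑v)) = 1 := by
      have h5 : (inner ℂ v v : ℂ) = dotProduct (star (⇑v)) (⇑v) :=
        by rw [EuclideanSpace.inner_eq_star_dotProduct, dotProduct_comm]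
      rw [← h5, inner_self_eq_norm_sq_to_K]
      have h6 : ‖v‖ = 1 := hCC.isHermitian.eigenvectorBasis.orthonormal.1 j
      simp [h6]
    rw [Matrix.sub_mulVec, Matrix.one_mulVec, dotProduct_sub, map_sub] at h0
    rw [hv]
    linarith [h0, hone]
  have hsvC0 : ∀ i, 0 ≤ sv C i := fun i => Real.sqrt_nonneg _
  have hsvC1 : ∀ i, sv C i ≤ 1 := by
    intro i
    show Real.sqrt _ ≤ 1
    rw [show (1:ℝ) = Real.sqrt 1 by rw [Real.sqrt_one]]
    exact Real.sqrt_le_sqrt (heigC _)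
  -- trace identities
  have hfsqM : fsq M = (k : ℝ) - fsq C := by
    have h1 : ((fsq M : ℝ) : ℂ) = Matrix.trace (Mᴴ * M) := (trace_cts M).symm
    rw [hMM, Matrix.trace_sub, Matrix.trace_one, trace_cts C] at h1
    have h2 := congrArg Complex.re h1
    simpa using h2
  have hsumeigC : ∑ i, hCC.isHermitian.eigenvalues i = fsq C := by
    have h4 : Matrix.trace (Cᴴ * C)
        = ((∑ i, hCC.isHermitian.eigenvalues i : ℝ) : ℂ) := by
      conv_lhs => rw [hCC.isHermitian.spectral_theorem, Unitary.conjStarAlgAut_apply]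
      rw [Matrix.trace_mul_cycle]
      have hV2 : (star (hCC.isHermitian.eigenvectorUnitary : Matrix (Fin k) (Fin k) ℂ)) *
          (hCC.isHermitian.eigenvectorUnitary : Matrix (Fin k) (Fin k) ℂ) = 1 :=
        Unitary.coe_star_mul_self _
      rw [hV2, Matrix.one_mul, Matrix.trace_diagonal]
      push_cast
      rfl
    have h5 := h4.symm.trans (trace_cts C)
    exact_mod_cast h5
  have hsum_sin : ∑ i, Real.sin (Real.arccos (sv C i)) ^ 2 = fsq M := by
    have h1 : ∀ i, Real.sin (Real.arccos (sv C i)) ^ 2 = 1 - (sv C i) ^ 2 := by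
      intro i
      rw [Real.sin_arccos, Real.sq_sqrt]
      nlinarith [hsvC0 i, hsvC1 i]
    rw [Finset.sum_congr rfl fun i _ => h1 i, Finset.sum_sub_distrib]
    have hsq : ∑ i, (sv C i) ^ 2 = fsq C := by
      have h2 : ∑ i, (sv C i) ^ 2
          = ∑ i, (Real.sqrt (hCC.isHermitian.eigenvalues i)) ^ 2 :=
        sum_comp_sortedDesc _ (· ^ 2)
      rw [h2, Finset.sum_congr rfl fun i _ => Real.sq_sqrt (hCC.eigenvalues_nonneg i),
        hsumeigC]
    rw [hsq, hfsqM]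
    simp
  -- conclusion
  have hθ : sinThetaF P Q = Real.sqrt (∑ i, Real.sin (Real.arccos (sv C i)) ^ 2) := rfl
  have hθnn : 0 ≤ sinThetaF P Q := by rw [hθ]; exact Real.sqrt_nonneg _
  have hθsq : sinThetaF P Q ^ 2 = fsq M := by
    rw [hθ, Real.sq_sqrt (Finset.sum_nonneg fun i _ => sq_nonneg _), hsum_sin]
  rw [hres, frobNorm_eq_sqrt_fsq]
  have hrhs : s2norm B * sinThetaF P Q
      = Real.sqrt ((s2norm B * sinThetaF P Q) ^ 2) :=
    (Real.sqrt_sq (mul_nonneg hs2nn hθnn)).symm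
  rw [hrhs]
  apply Real.sqrt_le_sqrt
  rw [mul_pow, hθsq]
  exact hkey
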